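/- Let p be a real polynomial with consecutive real roots α_{i_0} < α_{i_0+1}, where α_{i_0} has multiplicity m_{i_0}. Then there exist δ, δ' ∈ (α_{i_0}, α_{i_0+1}) such that p^{(m_{i_0})}(α_{i_0})·p'(x) > 0 for all x ∈ (α_{i_0}, δ] and p^{(m_{i_0})}(α_{i_0})·p'(x) < 0 for all x ∈ [δ', α_{i_0+1}). -/

import Mathlib

open Set Polynomial

/-- A continuous function with no zeros on an order-connected set has constant sign. -/
lemma sign_const_aux {f : ℝ → ℝ} (hf : Continuous f) {s : Set ℝ} (hs : s.OrdConnected)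
    (h0 : ∀ z ∈ s, f z ≠ 0) {x y : ℝ} (hx : x ∈ s) (hy : y ∈ s) (hfx : 0 < f x) : 0 < f y := by
  by_contra h
  push_neg at h
  have hfy : f y < 0 := lt_of_le_of_ne h (h0 y hy)
  rcases le_total x y with hxy | hxy
  · have := intermediate_value_Icc' hxy hf.continuousOn (a := x) (b := y)
    have h0mem : (0 : ℝ) ∈ Icc (f y) (f x) := ⟨hfy.le, hfx.le⟩
    obtain ⟨z, hz, hz0⟩ := this h0mem
    exact h0 z (hs.out hx hy hz) hz0
  · have := intermediate_value_Icc hxy hf.continuousOn (a := y) (b := x)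
    have h0mem : (0 : ℝ) ∈ Icc (f y) (f x) := ⟨hfy.le, hfx.le⟩
    obtain ⟨z, hz, hz0⟩ := this h0mem
    exact h0 z (hs.out hy hx hz) hz0

theorem stmt_2 (p : Polynomial ℝ) (hp : p ≠ 0) (a b : ℝ) (hab : a < b)
    (ha : p.IsRoot a) (hb : p.IsRoot b)
    (hmid : ∀ x ∈ Set.Ioo a b, ¬ p.IsRoot x) :
    ∃ δ ∈ Set.Ioo a b, ∃ δ' ∈ Set.Ioo a b,
      (∀ x ∈ Set.Ioc a δ,
        0 < Polynomial.eval a ((⇑Polynomial.derivative)^[p.rootMultiplicity a] p) *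
            Polynomial.eval x (Polynomial.derivative p)) ∧
      (∀ x ∈ Set.Ico δ' b,
        Polynomial.eval a ((⇑Polynomial.derivative)^[p.rootMultiplicity a] p) *
            Polynomial.eval x (Polynomial.derivative p) < 0) := by
  classical
  set m := p.rootMultiplicity a with hm
  set q := p /ₘ (X - C a) ^ m with hq
  set c := Polynomial.eval a ((⇑Polynomial.derivative)^[m] p) with hcdef
  have hqa : q.eval a ≠ 0 := eval_divByMonic_pow_rootMultiplicity_ne_zero a hp
  have hc : c = (m.factorial : ℝ) * q.eval a := by
    rw [hcdef, eval_iterate_derivative_rootMultiplicity, nsmul_eq_mul]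
  have hcne : c ≠ 0 := by
    rw [hc]
    exact mul_ne_zero (Nat.cast_ne_zero.mpr m.factorial_ne_zero) hqa
  -- p' is nonzero
  have hp' : derivative p ≠ 0 := by
    intro h
    have := eq_C_of_natDegree_eq_zero (natDegree_eq_zero_of_derivative_eq_zero h)
    rw [this] at ha hp
    simp [IsRoot] at ha
    simp [ha] at hp
  -- continuity of q near a gives sign of p near a
  have hQopen : IsOpen {y : ℝ | 0 < q.eval a * q.eval y} :=
    isOpen_lt continuous_const (continuous_const.mul q.continuous)
  have haQ : a ∈ {y : ℝ | 0 < q.eval a * q.eval y} := by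
    simpa [mul_self_pos] using hqa
  obtain ⟨ε, hε, hball⟩ := Metric.isOpen_iff.mp hQopen a haQ
  -- key : c * p.eval x > 0 on (a,b)
  have hpeval : ∀ x, p.eval x = (x - a) ^ m * q.eval x := by
    intro x
    conv_lhs => rw [← p.pow_mul_divByMonic_rootMultiplicity_eq a]
    simp [hq, hm]
  set y₀ := min (a + ε / 2) ((a + b) / 2) with hy₀
  have hy₀a : a < y₀ := lt_min (by linarith) (by linarith)
  have hy₀b : y₀ < b := (min_le_right _ _).trans_lt (by linarith)
  have hy₀ball : y₀ ∈ Metric.ball a ε := by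
    rw [Metric.mem_ball, Real.dist_eq, abs_lt]
    constructor
    · linarith
    · have := min_le_left (a + ε / 2) ((a + b) / 2)
      simp only [hy₀]
      linarith
  have hy₀pos : 0 < c * p.eval y₀ := by
    have h1 : 0 < q.eval a * q.eval y₀ := hball hy₀ball
    rw [hpeval, hc]
    have h2 : (0:ℝ) < (y₀ - a) ^ m := pow_pos (by linarith) m
    have h3 : (0:ℝ) < (m.factorial : ℝ) := Nat.cast_pos.mpr m.factorial_pos
    nlinarith [mul_pos (mul_pos h3 h2) h1]
  have key : ∀ x ∈ Ioo a b, 0 < c * p.eval x := by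
    intro x hx
    refine sign_const_aux (continuous_const.mul p.continuous) ordConnected_Ioo
      (fun z hz h0 => hmid z hz ?_) ⟨hy₀a, hy₀b⟩ hx hy₀pos
    rcases mul_eq_zero.mp h0 with h | h
    · exact absurd h hcne
    · exact h
  -- choose δ avoiding roots of p' near a, δ' near b
  have hfin : ({x | (derivative p).IsRoot x} ∩ Ioo a b).Finite :=
    (finite_setOf_isRoot hp').inter_of_left _
  set T := ({x | (derivative p).IsRoot x} ∩ Ioo a b) with hT
  have hfinb : (insert b T).Finite := hfin.insert b
  have hfina : (insert a T).Finite := hfin.insert a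
  have hne1 : (hfinb.toFinset).Nonempty := ⟨b, by simp⟩
  have hne2 : (hfina.toFinset).Nonempty := ⟨a, by simp⟩
  set μ := hfinb.toFinset.min' hne1 with hμ
  set ν := hfina.toFinset.max' hne2 with hν
  have hμmem : μ ∈ insert b T := by
    have := hfinb.toFinset.min'_mem hne1
    rwa [Set.Finite.mem_toFinset] at this
  have hνmem : ν ∈ insert a T := by
    have := hfina.toFinset.max'_mem hne2
    rwa [Set.Finite.mem_toFinset] at this
  have hμa : a < μ := by
    rcases hμmem with h | h
    · rwa [h]
    · exact h.2.1
  have hμb : μ ≤ b := by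
    rcases hμmem with h | h
    · exact h.le
    · exact h.2.2.le
  have hνb : ν < b := by
    rcases hνmem with h | h
    · rwa [h]
    · exact h.2.2
  have hνa : a ≤ ν := by
    rcases hνmem with h | h
    · exact h.ge
    · exact h.2.1.le
  have hμle : ∀ x ∈ T, μ ≤ x := fun x hx =>
    hfinb.toFinset.min'_le x (by rw [Set.Finite.mem_toFinset]; exact Set.mem_insert_of_mem _ hx)
  have hνge : ∀ x ∈ T, x ≤ ν := fun x hx =>
    hfina.toFinset.le_max' x (by rw [Set.Finite.mem_toFinset]; exact Set.mem_insert_of_mem _ hx)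
  refine ⟨(a + μ) / 2, ⟨by linarith, by linarith⟩, (ν + b) / 2, ⟨by linarith, by linarith⟩, ?_, ?_⟩
  · -- positive side
    set δ := (a + μ) / 2 with hδ
    have hnoroot : ∀ z ∈ Ioc a δ, c * (derivative p).eval z ≠ 0 := by
      intro z hz h0
      rcases mul_eq_zero.mp h0 with h | h
      · exact hcne h
      · have hzT : z ∈ T := ⟨h, hz.1, by have := hz.2; simp only [hδ] at this; linarith⟩
        have := hμle z hzT
        have := hz.2
        simp only [hδ] at this
        linarith
    intro x hx
    have hxb : x < b := by have := hx.2; simp only [hδ] at this; linarith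
    -- MVT on [a, x]
    obtain ⟨ξ, hξ, hξeq⟩ := exists_hasDerivAt_eq_slope (fun t => p.eval t)
      (fun t => (derivative p).eval t) hx.1 p.continuous.continuousOn
      (fun t _ => p.hasDerivAt t)
    have hpx : 0 < c * p.eval x := key x ⟨hx.1, hxb⟩
    have hξpos : 0 < c * (derivative p).eval ξ := by
      rw [hξeq]
      have : p.eval a = 0 := ha
      rw [this, sub_zero]
      have hxa : 0 < x - a := by linarith [hx.1]
      have heq : c * (p.eval x / (x - a)) = (c * p.eval x) / (x - a) := by ring
      rw [heq]
      exact div_pos hpx hxa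
    have hξmem : ξ ∈ Ioc a δ := ⟨hξ.1, hξ.2.le.trans hx.2⟩
    exact sign_const_aux (continuous_const.mul (derivative p).continuous) ordConnected_Ioc
      hnoroot hξmem hx hξpos
  · -- negative side
    set δ' := (ν + b) / 2 with hδ'
    have hnoroot : ∀ z ∈ Ico δ' b, -(c * (derivative p).eval z) ≠ 0 := by
      intro z hz h0
      rw [neg_eq_zero] at h0
      rcases mul_eq_zero.mp h0 with h | h
      · exact hcne h
      · have hza : a < z := by have := hz.1; simp only [hδ'] at this; linarith
        have hzT : z ∈ T := ⟨h, hza, hz.2⟩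
        have := hνge z hzT
        have := hz.1
        simp only [hδ'] at this
        linarith
    intro x hx
    have hxa : a < x := by have := hx.1; simp only [hδ'] at this; linarith
    obtain ⟨ξ, hξ, hξeq⟩ := exists_hasDerivAt_eq_slope (fun t => p.eval t)
      (fun t => (derivative p).eval t) hx.2 p.continuous.continuousOn
      (fun t _ => p.hasDerivAt t)
    have hpx : 0 < c * p.eval x := key x ⟨hxa, hx.2⟩
    have hξneg : 0 < -(c * (derivative p).eval ξ) := by
      rw [hξeq]
      have : p.eval b = 0 := hb
      rw [this, zero_sub]
      have hbx : 0 < b - x := by linarith [hx.2]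
      have : c * (-p.eval x / (b - x)) = -(c * p.eval x) / (b - x) := by ring
      rw [this]
      have := div_neg_of_neg_of_pos (neg_neg_of_pos hpx) hbx
      linarith
    have hξmem : ξ ∈ Ico δ' b := ⟨hx.1.trans hξ.1.le, hξ.2⟩
    have := sign_const_aux (continuous_const.mul (derivative p).continuous).neg ordConnected_Ico
      hnoroot hξmem hx hξneg
    have this' : 0 < -(c * (derivative p).eval x) := this
    linarith
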